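/- Let G be a group and C ≤ G a nontrivial proper subgroup such that the conjugates of C partition G∖{1} together with {1}; that is, every nonidentity element of G lies in exactly one conjugate of C. Then for any two distinct elements x, y ∈ G there is a unique subset of G of the form g·C^h (a left coset of a conjugate of C) containing both x and y. -/
import Mathlib


/-- Conjugate subgroup `C^h`. -/
def conjSub {G : Type*} [Group G] (C : Subgroup G) (h : G) : Subgroup G :=
  C.map (MulAut.conj h).toMonoidHom

/-- A left coset `g • C^h` of a conjugate of `C`, as a set ("line"). -/
def lineOf {G : Type*} [Group G] (C : Subgroup G) (g h : G) : Set G :=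
  (fun z => g * z) '' (conjSub C h : Set G)

lemma mem_lineOf {G : Type*} [Group G] (C : Subgroup G) (g h z : G) :
    z ∈ lineOf C g h ↔ g⁻¹ * z ∈ conjSub C h := by
  constructor
  · rintro ⟨c, hc, rfl⟩; simpa using hc
  · intro hc; exact ⟨g⁻¹ * z, hc, by group⟩

/-- If the conjugates of the nontrivial proper subgroup `C` partition `G ∖ {1}`
(every nonidentity element lies in exactly one conjugate of `C`), then any two distinct
elements of `G` lie on a unique "line", i.e. a left coset of a conjugate of `C`. -/
theorem stmt_8 {G : Type*} [Group G] (C : Subgroup G) (hbot : C ≠ ⊥) (htop : C ≠ ⊤)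
    (hpart : ∀ x : G, x ≠ 1 → ∃! D : Subgroup G, (∃ g : G, D = conjSub C g) ∧ x ∈ D) :
    ∀ x y : G, x ≠ y →
      ∃! L : Set G, (∃ g h : G, L = lineOf C g h) ∧ x ∈ L ∧ y ∈ L := by
  intro x y hxy
  have hne : x⁻¹ * y ≠ 1 := by
    intro h; apply hxy; have := congrArg (fun z => x * z) h; simpa using this.symm
  obtain ⟨D, ⟨⟨k, hDk⟩, hmemD⟩, huniq⟩ := hpart _ hne
  refine ⟨lineOf C x k, ⟨⟨x, k, rfl⟩, ?_, ?_⟩, ?_⟩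
  · rw [mem_lineOf]; simpa using (conjSub C k).one_mem
  · rw [mem_lineOf]; rw [hDk] at hmemD; exact hmemD
  · rintro L ⟨⟨g, h, rfl⟩, hxL, hyL⟩
    rw [mem_lineOf] at hxL hyL
    have hx'y : x⁻¹ * y ∈ conjSub C h := by
      have := mul_mem (inv_mem hxL) hyL
      simpa [mul_assoc] using this
    have heq : conjSub C h = conjSub C k := (huniq _ ⟨⟨h, rfl⟩, hx'y⟩).trans hDk
    rw [heq] at hxL
    ext z
    rw [mem_lineOf, mem_lineOf, heq]
    constructor
    · intro hz
      have e : x⁻¹ * z = (g⁻¹ * x)⁻¹ * (g⁻¹ * z) := by group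
      rw [e]; exact mul_mem (inv_mem hxL) hz
    · intro hz
      have e : g⁻¹ * z = (g⁻¹ * x) * (x⁻¹ * z) := by group
      rw [e]; exact mul_mem hxL hz
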